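/- Let K be a group, n ≥ 1, and let G = K ∗ (Z/n) be the free product, with s ∈ G the generator of the Z/n factor. Let H be the kernel of the retraction G → Z/n that kills K and sends s to 1. Then H has index n in G, H is generated by the conjugates Kⱼ = sʲKs⁻ʲ for j = 0, …, n−1, and the natural map K ∗ K ∗ ⋯ ∗ K (n factors) → H sending the j-th factor to Kⱼ is an isomorphism. -/

import Mathlib

open Monoid

section Aux

variable {K : Type*} [Group K] {n : ℕ} [NeZero n]

/-- Index shift on `Fin n` by an element of `ZMod n`. -/
def stmt11σ (a : ZMod n) (i : Fin n) : Fin n :=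
  ⟨(((i : ℕ) : ZMod n) + a).val, ZMod.val_lt _⟩

lemma stmt11σ_cast (a : ZMod n) (i : Fin n) :
    (((stmt11σ a i : Fin n) : ℕ) : ZMod n) = ((i : ℕ) : ZMod n) + a := by
  simp [stmt11σ, ZMod.natCast_zmod_val]

lemma stmt11σ_zero (i : Fin n) : stmt11σ (0 : ZMod n) i = i := by
  apply Fin.ext
  simp [stmt11σ, ZMod.val_cast_of_lt i.isLt]

lemma stmt11σ_add (a b : ZMod n) (i : Fin n) :
    stmt11σ (a + b) i = stmt11σ b (stmt11σ a i) := by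
  apply Fin.ext
  simp [stmt11σ, ZMod.natCast_zmod_val, add_assoc]

/-- shift homomorphism on the free product. -/
def stmt11shift (K : Type*) [Group K] (n : ℕ) [NeZero n] (a : ZMod n) :
    CoprodI (fun _ : Fin n => K) →* CoprodI (fun _ : Fin n => K) :=
  CoprodI.lift (fun i => (CoprodI.of (M := fun _ : Fin n => K) (i := stmt11σ a i)))

lemma stmt11shift_of (a : ZMod n) (i : Fin n) (k : K) :
    stmt11shift K n a (CoprodI.of (M := fun _ : Fin n => K) (i := i) k)
      = CoprodI.of (i := stmt11σ a i) k := by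
  simp [stmt11shift]

lemma stmt11shift_comp (a b : ZMod n) :
    (stmt11shift K n b).comp (stmt11shift K n a) = stmt11shift K n (a + b) := by
  refine CoprodI.ext_hom _ _ fun i => MonoidHom.ext fun k => ?_
  simp [stmt11shift_of, stmt11σ_add]

lemma stmt11shift_zero : stmt11shift K n (0 : ZMod n) = MonoidHom.id _ := by
  refine CoprodI.ext_hom _ _ fun i => MonoidHom.ext fun k => ?_
  simp [stmt11shift_of, stmt11σ_zero]

/-- The action of `ZMod n` on the free product by shifting indices, as automorphisms. -/
def stmt11A (K : Type*) [Group K] (n : ℕ) [NeZero n] :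
    Multiplicative (ZMod n) →* MulAut (CoprodI (fun _ : Fin n => K)) :=
  MonoidHom.mk' (fun a =>
    MonoidHom.toMulEquiv (stmt11shift K n a.toAdd) (stmt11shift K n (-a.toAdd))
      (by rw [stmt11shift_comp, add_neg_cancel, stmt11shift_zero])
      (by rw [stmt11shift_comp, neg_add_cancel, stmt11shift_zero]))
    (fun a b => by
      ext x
      show stmt11shift K n (a.toAdd + b.toAdd) x
        = stmt11shift K n a.toAdd (stmt11shift K n b.toAdd x)
      rw [← MonoidHom.comp_apply, stmt11shift_comp, add_comm])

lemma stmt11A_apply_of (a : Multiplicative (ZMod n)) (i : Fin n) (k : K) :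
    stmt11A K n a (CoprodI.of (M := fun _ : Fin n => K) (i := i) k)
      = CoprodI.of (i := stmt11σ a.toAdd i) k :=
  stmt11shift_of _ _ _

end Aux

section Aux2

variable {K : Type*} [Group K] {n : ℕ} [NeZero n]

/-- ψ : K ∗ ℤ/n →* (K ∗ ⋯ ∗ K) ⋊ ℤ/n -/
def stmt11ψ (K : Type*) [Group K] (n : ℕ) [NeZero n] :
    Coprod K (Multiplicative (ZMod n)) →*
      (CoprodI (fun _ : Fin n => K)) ⋊[stmt11A K n] Multiplicative (ZMod n) :=
  Coprod.lift
    (SemidirectProduct.inl.comp (CoprodI.of (M := fun _ : Fin n => K) (i := ⟨0, Nat.pos_of_ne_zero (NeZero.ne n)⟩)))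
    SemidirectProduct.inr

lemma stmt11ψ_inl (k : K) :
    stmt11ψ K n (Coprod.inl k) =
      SemidirectProduct.inl (CoprodI.of (M := fun _ : Fin n => K)
        (i := ⟨0, Nat.pos_of_ne_zero (NeZero.ne n)⟩) k) := by
  simp [stmt11ψ]

lemma stmt11ψ_inr (a : Multiplicative (ZMod n)) :
    stmt11ψ K n (Coprod.inr a) = SemidirectProduct.inr a := by
  simp [stmt11ψ]

end Aux2

section Aux3

variable {K : Type*} [Group K] {n : ℕ} [NeZero n]

/-- The canonical map `K ∗ ⋯ ∗ K →* K ∗ ℤ/n`. -/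
def stmt11φ' (K : Type*) [Group K] (n : ℕ) [NeZero n] :
    CoprodI (fun _ : Fin n => K) →* Coprod K (Multiplicative (ZMod n)) :=
  CoprodI.lift (fun j : Fin n =>
    (MulAut.conj ((Coprod.inr (Multiplicative.ofAdd (1 : ZMod n)) : Coprod K _) ^ (j : ℕ))).toMonoidHom.comp Coprod.inl)

lemma stmt11spow (m : ℕ) :
    (Coprod.inr (Multiplicative.ofAdd (1 : ZMod n)) : Coprod K (Multiplicative (ZMod n))) ^ m
      = Coprod.inr (Multiplicative.ofAdd ((m : ℕ) : ZMod n)) := by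
  rw [← map_pow]
  congr 1
  induction m with
  | zero => simp
  | succ m ih =>
      rw [pow_succ, ih, ← ofAdd_add]
      push_cast
      ring_nf

lemma stmt11φ'_of (j : Fin n) (k : K) :
    stmt11φ' K n (CoprodI.of (M := fun _ : Fin n => K) (i := j) k)
      = Coprod.inr (Multiplicative.ofAdd ((j : ℕ) : ZMod n)) * Coprod.inl k *
        (Coprod.inr (Multiplicative.ofAdd ((j : ℕ) : ZMod n)))⁻¹ := by
  simp [stmt11φ', CoprodI.lift_of, MulAut.conj_apply, stmt11spow]

lemma stmt11compat (g : Multiplicative (ZMod n)) :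
    (stmt11φ' K n).comp (stmt11A K n g).toMonoidHom
      = (MulAut.conj (Coprod.inr g : Coprod K (Multiplicative (ZMod n)))).toMonoidHom.comp (stmt11φ' K n) := by
  refine CoprodI.ext_hom _ _ fun i => MonoidHom.ext fun k => ?_
  simp only [MonoidHom.comp_apply, MulEquiv.coe_toMonoidHom, stmt11A_apply_of,
    stmt11φ'_of, MulAut.conj_apply, stmt11σ_cast]
  have hc : (Coprod.inr (Multiplicative.ofAdd (((i : ℕ) : ZMod n) + Multiplicative.toAdd g))
      : Coprod K (Multiplicative (ZMod n)))
      = Coprod.inr g * Coprod.inr (Multiplicative.ofAdd ((i : ℕ) : ZMod n)) := by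
    rw [← map_mul]
    congr 1
    rw [← ofAdd_toAdd g, ← ofAdd_add, add_comm]
    simp
  rw [hc]
  group

/-- θ : semidirect product → K ∗ ℤ/n -/
def stmt11θ (K : Type*) [Group K] (n : ℕ) [NeZero n] :
    (CoprodI (fun _ : Fin n => K)) ⋊[stmt11A K n] Multiplicative (ZMod n) →*
      Coprod K (Multiplicative (ZMod n)) :=
  SemidirectProduct.lift (stmt11φ' K n) Coprod.inr stmt11compat

lemma stmt11ψφ :
    (stmt11ψ K n).comp (stmt11φ' K n) = SemidirectProduct.inl := by
  refine CoprodI.ext_hom _ _ fun i => MonoidHom.ext fun k => ?_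
  simp only [MonoidHom.comp_apply, stmt11φ'_of, map_mul, map_inv, stmt11ψ_inl, stmt11ψ_inr]
  rw [(map_inv (SemidirectProduct.inr
      (φ := stmt11A K n)) (Multiplicative.ofAdd ((i : ℕ) : ZMod n))).symm,
    ← SemidirectProduct.inl_aut]
  congr 1
  rw [stmt11A_apply_of]
  have hi : stmt11σ (Multiplicative.toAdd (Multiplicative.ofAdd ((i : ℕ) : ZMod n)))
      (⟨0, Nat.pos_of_ne_zero (NeZero.ne n)⟩ : Fin n) = i := by
    apply Fin.ext
    simp [stmt11σ, ZMod.val_cast_of_lt i.isLt]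
  rw [hi]

lemma stmt11θψ :
    (stmt11θ K n).comp (stmt11ψ K n) = MonoidHom.id _ := by
  refine Coprod.hom_ext ?_ ?_ <;>
    refine MonoidHom.ext fun x => ?_
  · simp only [MonoidHom.comp_apply, Coprod.lift_apply_inl, stmt11ψ_inl, stmt11θ,
      SemidirectProduct.lift_inl, stmt11φ'_of, MonoidHom.id_apply]
    simp
  · simp [stmt11θ, stmt11ψ_inr]

lemma stmt11ψθ :
    (stmt11ψ K n).comp (stmt11θ K n) = MonoidHom.id _ := by
  refine SemidirectProduct.hom_ext ?_ ?_
  · refine MonoidHom.ext fun x => ?_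
    simp only [MonoidHom.comp_apply, MonoidHom.id_apply, stmt11θ, SemidirectProduct.lift_inl]
    exact DFunLike.congr_fun stmt11ψφ x
  · refine MonoidHom.ext fun a => ?_
    simp [stmt11θ, stmt11ψ_inr]

end Aux3

/-- Let `G = K ∗ ℤ/n` with `s` the generator of the `ℤ/n` factor and `H`
the kernel of the retraction `G → ℤ/n`.  Then `H` has index `n`, is generated by the
conjugates `sʲ K s⁻ʲ` (`j = 0, …, n-1`), and the natural map from the `n`-fold free
product `K ∗ ⋯ ∗ K` sending the `j`-th factor to `sʲ K s⁻ʲ` is an isomorphism onto `H`. -/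
theorem stmt11 {K : Type*} [Group K] (n : ℕ) (hn : 1 ≤ n)
    (s : Coprod K (Multiplicative (ZMod n)))
    (hs : s = Coprod.inr (Multiplicative.ofAdd (1 : ZMod n)))
    (r : Coprod K (Multiplicative (ZMod n)) →* Multiplicative (ZMod n))
    (hr : r = Coprod.lift 1 (MonoidHom.id (Multiplicative (ZMod n))))
    (H : Subgroup (Coprod K (Multiplicative (ZMod n)))) (hH : H = r.ker)
    (φ : CoprodI (fun _ : Fin n => K) →* Coprod K (Multiplicative (ZMod n)))
    (hφ : φ = CoprodI.lift (fun j : Fin n =>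
      (MulAut.conj (s ^ (j : ℕ))).toMonoidHom.comp Coprod.inl)) :
    H.index = n ∧
    H = Subgroup.closure
      {x | ∃ j < n, ∃ k : K, x = s ^ j * Coprod.inl k * (s ^ j)⁻¹} ∧
    Function.Injective φ ∧ φ.range = H := by

  haveI : NeZero n := ⟨by omega⟩
  subst hs hr hH hφ
  set s : Coprod K (Multiplicative (ZMod n)) :=
    Coprod.inr (Multiplicative.ofAdd (1 : ZMod n)) with hs
  set r : Coprod K (Multiplicative (ZMod n)) →* Multiplicative (ZMod n) :=
    Coprod.lift 1 (MonoidHom.id (Multiplicative (ZMod n))) with hr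
  have hφeq : CoprodI.lift (fun j : Fin n =>
      (MulAut.conj (s ^ (j : ℕ))).toMonoidHom.comp Coprod.inl) = stmt11φ' K n := rfl
  rw [hφeq]
  -- r in terms of ψ
  have hrinl : ∀ k : K, r (Coprod.inl k) = 1 := fun k => by
    simp [hr]
  have hrinr : ∀ a : Multiplicative (ZMod n), r (Coprod.inr a) = a := fun a => by
    simp [hr]
  have hrψ : ∀ x, r x = SemidirectProduct.rightHom (stmt11ψ K n x) := by
    have : r = SemidirectProduct.rightHom.comp (stmt11ψ K n) := by
      refine Coprod.hom_ext ?_ ?_ <;> refine MonoidHom.ext fun x => ?_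
      · simp [hrinl, stmt11ψ_inl]
      · simp [hrinr, stmt11ψ_inr]
    exact fun x => by rw [this]; rfl
  have hψφ : ∀ x, stmt11ψ K n (stmt11φ' K n x) = SemidirectProduct.inl x :=
    fun x => DFunLike.congr_fun stmt11ψφ x
  have hθψ : ∀ x, stmt11θ K n (stmt11ψ K n x) = x :=
    fun x => DFunLike.congr_fun stmt11θψ x
  have hθinl : ∀ x, stmt11θ K n (SemidirectProduct.inl x) = stmt11φ' K n x :=
    fun x => by simp [stmt11θ]
  -- range φ = ker r
  have hrange : (stmt11φ' K n).range = r.ker := by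
    ext x
    constructor
    · rintro ⟨y, rfl⟩
      simp only [MonoidHom.mem_ker, hrψ, hψφ]
      exact SemidirectProduct.rightHom_inl y
    · intro hx
      rw [MonoidHom.mem_ker, hrψ] at hx
      have : stmt11ψ K n x ∈ SemidirectProduct.rightHom.ker := hx
      rw [← SemidirectProduct.range_inl_eq_ker_rightHom] at this
      obtain ⟨y, hy⟩ := this
      exact ⟨y, by rw [← hθinl, hy, hθψ]⟩
  have hsurj : Function.Surjective r := fun a => ⟨Coprod.inr a, hrinr a⟩
  refine ⟨?_, ?_, ?_, hrange⟩
  · rw [Subgroup.index_ker, MonoidHom.range_eq_top.2 hsurj]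
    exact (Nat.card_congr (Subgroup.topEquiv.toEquiv.trans Multiplicative.toAdd)).trans
      (Nat.card_zmod n)
  · rw [← hrange]
    apply le_antisymm
    · rintro x ⟨w, rfl⟩
      induction w using CoprodI.induction_on with
      | one => simpa using Subgroup.one_mem _
      | of i k =>
          apply Subgroup.subset_closure
          refine ⟨(i : ℕ), i.isLt, k, ?_⟩
          rw [stmt11φ'_of, hs, stmt11spow]
      | mul x y hx hy =>
          rw [map_mul]; exact Subgroup.mul_mem _ hx hy
    · rw [Subgroup.closure_le]
      rintro x ⟨j, hj, k, rfl⟩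
      show _ ∈ (stmt11φ' K n).range
      exact ⟨CoprodI.of (M := fun _ : Fin n => K) (i := ⟨j, hj⟩) k, by
        rw [stmt11φ'_of, hs, stmt11spow]⟩
  · intro a b hab
    have := congrArg (stmt11ψ K n) hab
    rw [hψφ, hψφ] at this
    exact SemidirectProduct.inl_injective this
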